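/- arXiv:2505.18558 — 2 statements merged into one kernel-verified Lean document; each statement's English description precedes it below -/
import Mathlib

section
/- Let X and H be finite types, let p̃ be a probability mass function on X, and let p : ℝ → X → H → ℝ be such that p θ x h > 0 for all (θ, x, h) with θ near θ₀, θ ↦ p θ x h is differentiable at θ₀ for each (x,h), and ∑_{x,h} p θ x h = 1 for all θ. Write pM θ x = ∑_h p θ x h for the marginal and post θ x h = p θ x h / pM θ x for the posterior. Then the derivative at θ₀ of θ ↦ KL(p̃ ‖ pM θ) equals −∑_x p̃(x) ∑_h post θ₀ x h · deriv (fun θ => log (p θ x h)) θ₀. -/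
/-- First JSA stationarity equation (Eq. 3): the gradient of KL[p̃(x) ‖ p_θ(x)] equals minus
the expectation E_{p̃(x) p_θ(h|x)}[∂/∂θ log p_θ(x,h)]. -/
theorem jsa_theta_gradient
    {X H : Type*} [Fintype X] [Fintype H]
    (ptilde : X → ℝ) (hpt : ∀ x, 0 ≤ ptilde x) (hptsum : ∑ x, ptilde x = 1)
    (p : ℝ → X → H → ℝ) (θ₀ : ℝ)
    (hpos : ∀ᶠ θ in nhds θ₀, ∀ x h, 0 < p θ x h)
    (hdiff : ∀ x h, DifferentiableAt ℝ (fun θ => p θ x h) θ₀)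
    (hnorm : ∀ θ, ∑ x, ∑ h, p θ x h = 1) :
    deriv (fun θ => ∑ x, ptilde x * Real.log (ptilde x / ∑ h, p θ x h)) θ₀ =
      -∑ x, ptilde x * ∑ h, (p θ₀ x h / ∑ h', p θ₀ x h') *
        deriv (fun θ => Real.log (p θ x h)) θ₀ := by
  rcases isEmpty_or_nonempty H with hH | hH
  · exfalso
    have := hnorm θ₀
    simp [Finset.sum_empty] at this
  have hpos0 : ∀ x h, 0 < p θ₀ x h := hpos.self_of_nhds
  -- derivative of each joint
  set D : X → H → ℝ := fun x h => deriv (fun θ => p θ x h) θ₀ with hD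
  -- marginal derivative
  have hpM : ∀ x, HasDerivAt (fun θ => ∑ h, p θ x h) (∑ h, D x h) θ₀ := by
    intro x
    exact HasDerivAt.fun_sum fun h _ => (hdiff x h).hasDerivAt
  have hpM0 : ∀ x, 0 < ∑ h, p θ₀ x h := fun x =>
    Finset.sum_pos (fun h _ => hpos0 x h) Finset.univ_nonempty
  -- per-x derivative of the KL term
  have hterm : ∀ x, HasDerivAt (fun θ => ptilde x * Real.log (ptilde x / ∑ h, p θ x h))
      (-(ptilde x * (∑ h, D x h) / ∑ h, p θ₀ x h)) θ₀ := by
    intro x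
    rcases eq_or_lt_of_le (hpt x) with h0 | h0
    · have : (fun θ => ptilde x * Real.log (ptilde x / ∑ h, p θ x h)) = fun _ => (0:ℝ) := by
        funext θ; rw [← h0, zero_mul]
      rw [this, ← h0]
      simpa using hasDerivAt_const θ₀ (0:ℝ)
    · have hEq : (fun θ => ptilde x * (Real.log (ptilde x) - Real.log (∑ h, p θ x h)))
          =ᶠ[nhds θ₀] (fun θ => ptilde x * Real.log (ptilde x / ∑ h, p θ x h)) := by
        filter_upwards [hpos] with θ hθ
        rw [Real.log_div h0.ne' (Finset.sum_pos (fun h _ => hθ x h) Finset.univ_nonempty).ne']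
      have hg : HasDerivAt (fun θ => ptilde x * (Real.log (ptilde x) - Real.log (∑ h, p θ x h)))
          (ptilde x * (0 - (∑ h, D x h) / ∑ h, p θ₀ x h)) θ₀ := by
        exact ((hasDerivAt_const θ₀ (Real.log (ptilde x))).sub
          ((hpM x).log (hpM0 x).ne')).const_mul (ptilde x)
      have := hg.congr_of_eventuallyEq hEq.symm
      refine this.congr_deriv ?_
      ring
  have hsum : HasDerivAt (fun θ => ∑ x, ptilde x * Real.log (ptilde x / ∑ h, p θ x h))
      (∑ x, -(ptilde x * (∑ h, D x h) / ∑ h, p θ₀ x h)) θ₀ :=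
    HasDerivAt.fun_sum fun x _ => hterm x
  rw [hsum.deriv, ← Finset.sum_neg_distrib]
  refine Finset.sum_congr rfl fun x _ => ?_
  have hlog : ∀ h : H, deriv (fun θ => Real.log (p θ x h)) θ₀ = D x h / p θ₀ x h := by
    intro h
    exact (((hdiff x h).hasDerivAt).log (hpos0 x h).ne').deriv
  have : ∑ h, (p θ₀ x h / ∑ h', p θ₀ x h') * deriv (fun θ => Real.log (p θ x h)) θ₀
      = (∑ h, D x h) / ∑ h', p θ₀ x h' := by
    rw [Finset.sum_div]
    refine Finset.sum_congr rfl fun h _ => ?_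
    rw [hlog h, div_mul_div_comm, mul_comm (p θ₀ x h), mul_div_mul_right _ _ (hpos0 x h).ne']
  rw [this]
  ring
end

section
/- Let X, Y, H be finite types, let p̃X be a probability mass function on X and p̃XY a probability mass function on X × Y whose X-marginal may differ from p̃X. Let p : ℝ → X → Y → H → ℝ satisfy p θ x y h > 0 for θ near θ₀, θ ↦ p θ x y h differentiable at θ₀ for each (x,y,h), and ∑_{x,y,h} p θ x y h = 1 for all θ. Write pX θ x = ∑_{y,h} p θ x y h, pXY θ x y = ∑_h p θ x y h, postYH θ x y h = p θ x y h / pX θ x, and postH θ x y h = p θ x y h / pXY θ x y. Then the derivative at θ₀ of θ ↦ KL(p̃X ‖ pX θ) + KL(p̃XY ‖ pXY θ) equals −(∑_x p̃X(x) ∑_{y,h} postYH θ₀ x y h · deriv (fun θ => log (p θ x y h)) θ₀ + ∑_{x,y} p̃XY(x,y) ∑_h postH θ₀ x y h · deriv (fun θ => log (p θ x y h)) θ₀). -/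
private lemma jsa_aux_mul_log_div (a b : ℝ) (ha : 0 ≤ a) (hb : 0 < b) :
    a * Real.log (a / b) = a * Real.log a - a * Real.log b := by
  rcases ha.eq_or_lt with h | h
  · simp [← h]
  · rw [Real.log_div h.ne' hb.ne', mul_sub]

/-- Semi-supervised JSA θ-stationarity equation (Eq. 5): the gradient of
KL[p̃(x) ‖ p_θ(x)] + KL[p̃(x,y) ‖ p_θ(x,y)] equals minus the sum of the expectations
E_{p̃(x) p_θ(y,h|x)}[∂/∂θ log p_θ(x,y,h)] + E_{p̃(x,y) p_θ(h|x,y)}[∂/∂θ log p_θ(x,y,h)]. -/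
theorem jsa_semi_theta_gradient
    {X Y H : Type*} [Fintype X] [Fintype Y] [Fintype H]
    (ptX : X → ℝ) (hptX : ∀ x, 0 ≤ ptX x) (hptXsum : ∑ x, ptX x = 1)
    (ptXY : X × Y → ℝ) (hptXY : ∀ z, 0 ≤ ptXY z) (hptXYsum : ∑ z, ptXY z = 1)
    (p : ℝ → X → Y → H → ℝ) (θ₀ : ℝ)
    (hpos : ∀ᶠ θ in nhds θ₀, ∀ x y h, 0 < p θ x y h)
    (hdiff : ∀ x y h, DifferentiableAt ℝ (fun θ => p θ x y h) θ₀)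
    (hnorm : ∀ θ, ∑ x, ∑ y, ∑ h, p θ x y h = 1) :
    deriv (fun θ =>
        (∑ x, ptX x * Real.log (ptX x / ∑ y, ∑ h, p θ x y h)) +
          ∑ z : X × Y, ptXY z * Real.log (ptXY z / ∑ h, p θ z.1 z.2 h)) θ₀ =
      -((∑ x, ptX x * ∑ y, ∑ h,
            (p θ₀ x y h / ∑ y', ∑ h', p θ₀ x y' h') *
              deriv (fun θ => Real.log (p θ x y h)) θ₀) +
          ∑ z : X × Y, ptXY z * ∑ h,
            (p θ₀ z.1 z.2 h / ∑ h', p θ₀ z.1 z.2 h') *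
              deriv (fun θ => Real.log (p θ z.1 z.2 h)) θ₀) := by
  classical
  have hpos0 : ∀ x y h, 0 < p θ₀ x y h := hpos.self_of_nhds
  have hY : Nonempty Y := by
    by_contra hc
    rw [not_nonempty_iff] at hc
    have h1 := hnorm θ₀
    simp at h1
  have hH : Nonempty H := by
    by_contra hc
    rw [not_nonempty_iff] at hc
    have h1 := hnorm θ₀
    simp at h1
  set d : X → Y → H → ℝ := fun x y h => deriv (fun θ => p θ x y h) θ₀ with hd
  have hder : ∀ x y h, HasDerivAt (fun θ => p θ x y h) (d x y h) θ₀ :=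
    fun x y h => (hdiff x y h).hasDerivAt
  have hpX : ∀ x, HasDerivAt (fun θ => ∑ y, ∑ h, p θ x y h) (∑ y, ∑ h, d x y h) θ₀ :=
    fun x => HasDerivAt.fun_sum fun y _ => HasDerivAt.fun_sum fun h _ => hder x y h
  have hpXY : ∀ (x : X) (y : Y), HasDerivAt (fun θ => ∑ h, p θ x y h) (∑ h, d x y h) θ₀ :=
    fun x y => HasDerivAt.fun_sum fun h _ => hder x y h
  have hSx0 : ∀ x, 0 < ∑ y, ∑ h, p θ₀ x y h := fun x =>
    Finset.sum_pos (fun y _ => Finset.sum_pos (fun h _ => hpos0 x y h) Finset.univ_nonempty)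
      Finset.univ_nonempty
  have hSz0 : ∀ (x : X) (y : Y), 0 < ∑ h, p θ₀ x y h := fun x y =>
    Finset.sum_pos (fun h _ => hpos0 x y h) Finset.univ_nonempty
  -- eventual rewriting of the KL sums
  have heq : (fun θ =>
        (∑ x, ptX x * Real.log (ptX x / ∑ y, ∑ h, p θ x y h)) +
          ∑ z : X × Y, ptXY z * Real.log (ptXY z / ∑ h, p θ z.1 z.2 h))
      =ᶠ[nhds θ₀] (fun θ =>
        ((∑ x, ptX x * Real.log (ptX x)) - ∑ x, ptX x * Real.log (∑ y, ∑ h, p θ x y h)) +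
          ((∑ z : X × Y, ptXY z * Real.log (ptXY z)) -
            ∑ z : X × Y, ptXY z * Real.log (∑ h, p θ z.1 z.2 h))) := by
    filter_upwards [hpos] with θ hθ
    have hSx : ∀ x, 0 < ∑ y, ∑ h, p θ x y h := fun x =>
      Finset.sum_pos (fun y _ => Finset.sum_pos (fun h _ => hθ x y h) Finset.univ_nonempty)
        Finset.univ_nonempty
    have hSz : ∀ (x : X) (y : Y), 0 < ∑ h, p θ x y h := fun x y =>
      Finset.sum_pos (fun h _ => hθ x y h) Finset.univ_nonempty
    rw [← Finset.sum_sub_distrib, ← Finset.sum_sub_distrib]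
    congr 1
    · exact Finset.sum_congr rfl fun x _ => jsa_aux_mul_log_div _ _ (hptX x) (hSx x)
    · exact Finset.sum_congr rfl fun z _ => jsa_aux_mul_log_div _ _ (hptXY z) (hSz z.1 z.2)
  -- derivative of the rewritten function
  have hA : HasDerivAt (fun θ => ∑ x, ptX x * Real.log (∑ y, ∑ h, p θ x y h))
      (∑ x, ptX x * ((∑ y, ∑ h, d x y h) / (∑ y, ∑ h, p θ₀ x y h))) θ₀ :=
    HasDerivAt.fun_sum fun x _ => ((hpX x).log (hSx0 x).ne').const_mul (ptX x)
  have hB : HasDerivAt (fun θ => ∑ z : X × Y, ptXY z * Real.log (∑ h, p θ z.1 z.2 h))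
      (∑ z : X × Y, ptXY z * ((∑ h, d z.1 z.2 h) / (∑ h, p θ₀ z.1 z.2 h))) θ₀ :=
    HasDerivAt.fun_sum fun z _ => ((hpXY z.1 z.2).log (hSz0 z.1 z.2).ne').const_mul (ptXY z)
  have hG : HasDerivAt (fun θ =>
        ((∑ x, ptX x * Real.log (ptX x)) - ∑ x, ptX x * Real.log (∑ y, ∑ h, p θ x y h)) +
          ((∑ z : X × Y, ptXY z * Real.log (ptXY z)) -
            ∑ z : X × Y, ptXY z * Real.log (∑ h, p θ z.1 z.2 h)))
      ((0 - ∑ x, ptX x * ((∑ y, ∑ h, d x y h) / (∑ y, ∑ h, p θ₀ x y h))) +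
        (0 - ∑ z : X × Y, ptXY z * ((∑ h, d z.1 z.2 h) / (∑ h, p θ₀ z.1 z.2 h)))) θ₀ :=
    ((hasDerivAt_const θ₀ _).sub hA).add ((hasDerivAt_const θ₀ _).sub hB)
  rw [heq.deriv_eq, hG.deriv]
  -- simplify the right-hand side
  have hlogd : ∀ x y h, deriv (fun θ => Real.log (p θ x y h)) θ₀ = d x y h / p θ₀ x y h :=
    fun x y h => ((hder x y h).log (hpos0 x y h).ne').deriv
  have hinner : ∀ x, (∑ y, ∑ h, (p θ₀ x y h / ∑ y', ∑ h', p θ₀ x y' h') *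
      deriv (fun θ => Real.log (p θ x y h)) θ₀)
      = (∑ y, ∑ h, d x y h) / (∑ y, ∑ h, p θ₀ x y h) := by
    intro x
    rw [Finset.sum_div]
    refine Finset.sum_congr rfl fun y _ => ?_
    rw [Finset.sum_div]
    refine Finset.sum_congr rfl fun h _ => ?_
    rw [hlogd, div_mul_div_comm, mul_comm (p θ₀ x y h),
      mul_div_mul_right _ _ (hpos0 x y h).ne']
  have hinner2 : ∀ (x : X) (y : Y), (∑ h, (p θ₀ x y h / ∑ h', p θ₀ x y h') *
      deriv (fun θ => Real.log (p θ x y h)) θ₀)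
      = (∑ h, d x y h) / (∑ h, p θ₀ x y h) := by
    intro x y
    rw [Finset.sum_div]
    refine Finset.sum_congr rfl fun h _ => ?_
    rw [hlogd, div_mul_div_comm, mul_comm (p θ₀ x y h),
      mul_div_mul_right _ _ (hpos0 x y h).ne']
  have e1 : ∀ x, ptX x * ∑ y, ∑ h, (p θ₀ x y h / ∑ y', ∑ h', p θ₀ x y' h') *
      deriv (fun θ => Real.log (p θ x y h)) θ₀
      = ptX x * ((∑ y, ∑ h, d x y h) / (∑ y, ∑ h, p θ₀ x y h)) := fun x => by
    rw [hinner x]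
  simp only [e1]
  have e2 : ∀ z : X × Y, ptXY z * ∑ h, (p θ₀ z.1 z.2 h / ∑ h', p θ₀ z.1 z.2 h') *
      deriv (fun θ => Real.log (p θ z.1 z.2 h)) θ₀
      = ptXY z * ((∑ h, d z.1 z.2 h) / (∑ h, p θ₀ z.1 z.2 h)) := fun z => by
    rw [hinner2 z.1 z.2]
  simp only [e2]
  ring
end
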